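/- Let τ_m > 0 and let z be a complex number with Im(z) > 0. Then (1/√π)·∫_0^{∞} ( ∑_{k∈ℤ} exp(−(τ + 2kτ_m)²/4) )·exp(izτ) dτ = i/(τ_m·z) − 2i·τ_m·z·∑_{n=1}^{∞} exp(−n²π²/τ_m²)/(n²π² − τ_m²z²), where the series on the right converges absolutely. Equivalently, with h = π/τ_m, the right-hand side equals i·h/(π·z) − i·(2h·z/π)·∑_{n=1}^{∞} exp(−n²h²)/(n²h² − z²). -/

import Mathlib

open Real MeasureTheory Set Complex Filter


lemma cr_integrable {w : ℂ} (hw : w.re < 0) :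
    IntegrableOn (fun x : ℝ => Complex.exp (w * x)) (Ioi 0) := by
  apply Integrable.mono' (g := fun x : ℝ => Real.exp (w.re * x))
  · exact (exp_neg_integrableOn_Ioi 0 (by linarith : 0 < -w.re)).congr_fun
      (fun x _ => by ring_nf) measurableSet_Ioi
  · exact (Complex.continuous_exp.comp (continuous_const.mul Complex.continuous_ofReal)).aestronglyMeasurable.restrict
  · filter_upwards with x
    rw [Complex.norm_exp]
    simp [Complex.mul_re]

lemma cr_integral {w : ℂ} (hw : w.re < 0) :
    ∫ x in Ioi (0:ℝ), Complex.exp (w * x) = -w⁻¹ := by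
  have hw0 : w ≠ 0 := fun h => by simp [h] at hw
  have := integral_Ioi_of_hasDerivAt_of_tendsto
    (f := fun x : ℝ => Complex.exp (w * x) / w) (f' := fun x : ℝ => Complex.exp (w * x))
    (a := 0) (m := 0) ?_ ?_ (cr_integrable hw) ?_
  · rw [this]; simp [hw0]
  · exact ((Complex.continuous_exp.comp (continuous_const.mul Complex.continuous_ofReal)).div_const w).continuousWithinAt
  · intro x _
    have : HasDerivAt (fun x : ℝ => Complex.exp (w * x)) (w * Complex.exp (w * x)) x := by
      have h1 : HasDerivAt (fun x : ℝ => w * (x:ℂ)) w x := by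
        simpa using (Complex.ofRealCLM.hasDerivAt (x := x)).const_mul w
      simpa [mul_comm] using h1.cexp
    simpa [mul_comm, mul_div_assoc, mul_div_cancel_left₀ _ hw0] using this.div_const w
  · rw [show (0:ℂ) = 0 / w by simp]
    apply Tendsto.div_const
    rw [tendsto_zero_iff_norm_tendsto_zero]
    simp only [Complex.norm_exp]
    have : ∀ x : ℝ, (w * x).re = w.re * x := fun x => by simp [Complex.mul_re]
    simp only [this]
    exact Real.tendsto_exp_atBot.comp (tendsto_id.const_mul_atTop_of_neg hw)


lemma cr_summable_nat {c : ℝ} (hc : 0 < c) :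
    Summable fun n : ℕ => Real.exp (-c * (n:ℝ)^2) := by
  apply Summable.of_norm_bounded_eventually_nat (g := fun n : ℕ => Real.exp (-c) ^ n)
  · exact summable_geometric_of_lt_one (by positivity) (Real.exp_lt_one_iff.mpr (by linarith))
  · filter_upwards [Filter.eventually_ge_atTop 1] with n hn
    rw [Real.norm_of_nonneg (Real.exp_pos _).le, ← Real.exp_nat_mul]
    apply Real.exp_le_exp.mpr
    have : (n:ℝ) ≥ 1 := by exact_mod_cast hn
    nlinarith [mul_nonneg (mul_nonneg hc.le (by positivity : (0:ℝ) ≤ (n:ℝ))) (by linarith : (0:ℝ) ≤ (n:ℝ) - 1)]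

lemma cr_summable_int {c : ℝ} (hc : 0 < c) :
    Summable fun n : ℤ => Real.exp (-c * (n:ℝ)^2) := by
  apply Summable.of_nat_of_neg <;> simpa using cr_summable_nat hc


lemma cr_poisson {τm : ℝ} (hτm : 0 < τm) (τ : ℝ) :
    ((∑' k : ℤ, Real.exp (-(τ + 2 * k * τm) ^ 2 / 4) : ℝ) : ℂ) =
      ((Real.sqrt π / τm : ℝ) : ℂ) *
        ∑' n : ℤ, Complex.exp (-(n:ℂ)^2 * (π:ℂ)^2 / (τm:ℂ)^2 - Complex.I * n * π * τ / τm) := by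
  have hτm' : (τm:ℂ) ≠ 0 := Complex.ofReal_ne_zero.mpr hτm.ne'
  set a : ℂ := ((π / τm^2 : ℝ) : ℂ) with ha_def
  have ha : 0 < a.re := by
    simp only [ha_def, Complex.ofReal_re]
    positivity
  have key := Complex.tsum_exp_neg_quadratic ha (-Complex.I * τ / (2 * τm))
  -- rewrite both sides of key
  have hL : ∀ n : ℤ, Complex.exp (-π * a * n ^ 2 + 2 * π * (-Complex.I * τ / (2 * τm)) * n)
      = Complex.exp (-(n:ℂ)^2 * (π:ℂ)^2 / (τm:ℂ)^2 - Complex.I * n * π * τ / τm) := by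
    intro n
    congr 1
    simp only [ha_def]
    have hπ : (π:ℂ) ≠ 0 := Complex.ofReal_ne_zero.mpr Real.pi_ne_zero
    push_cast
    field_simp
    ring
  have hR : ∀ n : ℤ, Complex.exp (-π / a * (n + Complex.I * (-Complex.I * τ / (2 * τm))) ^ 2)
      = ((Real.exp (-(τ + 2 * n * τm) ^ 2 / 4) : ℝ) : ℂ) := by
    intro n
    have hE : -(π:ℂ) / a * ((n:ℂ) + Complex.I * (-Complex.I * τ / (2 * τm))) ^ 2
        = ((-(τ + 2 * n * τm) ^ 2 / 4 : ℝ) : ℂ) := by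
      have hI : Complex.I * (-Complex.I * (τ:ℂ) / (2 * τm)) = (τ:ℂ) / (2 * τm) := by
        rw [show Complex.I * (-Complex.I * (τ:ℂ) / (2 * τm))
            = -(Complex.I * Complex.I) * (τ:ℂ) / (2 * τm) by ring,
          Complex.I_mul_I]
        ring
      rw [hI, ha_def]
      have hπ : (π:ℂ) ≠ 0 := Complex.ofReal_ne_zero.mpr Real.pi_ne_zero
      push_cast
      field_simp
      ring
    rw [hE, Complex.ofReal_exp]
  simp only [hL, hR] at key
  have hc : ((Real.sqrt π / τm : ℝ) : ℂ) ≠ 0 := by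
    apply Complex.ofReal_ne_zero.mpr
    positivity
  have hsqrt : a ^ (1/2 : ℂ) = ((Real.sqrt π / τm : ℝ) : ℂ) := by
    rw [ha_def, show ((1:ℂ)/2) = ((1/2 : ℝ) : ℂ) by norm_num,
      ← Complex.ofReal_cpow (by positivity)]
    congr 1
    rw [← Real.sqrt_eq_rpow, Real.sqrt_div (le_of_lt Real.pi_pos), Real.sqrt_sq hτm.le]
  rw [hsqrt] at key
  rw [Complex.ofReal_tsum, key, ← mul_assoc, mul_one_div, div_self hc, one_mul]

lemma cr_pair (e u v s z : ℂ) (hu : u ≠ 0) (hv : v ≠ 0) (hs : s ≠ 0) (huv : u + v = 2 * z) :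
    e * -(Complex.I * u)⁻¹ + e * -(Complex.I * v)⁻¹ =
      -(2 * Complex.I * s * z) * (e / (-s * u * v)) := by
  have key : e * -(Complex.I * u)⁻¹ + e * -(Complex.I * v)⁻¹
      = e * Complex.I * (u⁻¹ + v⁻¹) := by
    rw [mul_inv, mul_inv, Complex.inv_I]
    ring
  rw [key, inv_add_inv hu hv, huv]
  field_simp

set_option maxHeartbeats 1000000 in
theorem chiarella_reichel_exact (τm : ℝ) (hτm : 0 < τm) (z : ℂ) (hz : 0 < z.im)
    (h : ℝ) (hh : h = π / τm) :
    Summable (fun n : ℕ =>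
      ‖Complex.exp (-((n : ℂ) + 1) ^ 2 * (π : ℂ) ^ 2 / (τm : ℂ) ^ 2) /
        (((n : ℂ) + 1) ^ 2 * (π : ℂ) ^ 2 - (τm : ℂ) ^ 2 * z ^ 2)‖) ∧
    (1 / (Real.sqrt π : ℂ)) *
      ∫ τ in Set.Ioi (0:ℝ),
        ((∑' k : ℤ, Real.exp (-(τ + 2 * k * τm) ^ 2 / 4) : ℝ) : ℂ) *
          Complex.exp (Complex.I * z * τ) =
      Complex.I / ((τm : ℂ) * z) -
        2 * Complex.I * (τm : ℂ) * z *
          ∑' n : ℕ,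
            Complex.exp (-((n : ℂ) + 1) ^ 2 * (π : ℂ) ^ 2 / (τm : ℂ) ^ 2) /
              (((n : ℂ) + 1) ^ 2 * (π : ℂ) ^ 2 - (τm : ℂ) ^ 2 * z ^ 2) ∧
    Complex.I / ((τm : ℂ) * z) -
        2 * Complex.I * (τm : ℂ) * z *
          ∑' n : ℕ,
            Complex.exp (-((n : ℂ) + 1) ^ 2 * (π : ℂ) ^ 2 / (τm : ℂ) ^ 2) /
              (((n : ℂ) + 1) ^ 2 * (π : ℂ) ^ 2 - (τm : ℂ) ^ 2 * z ^ 2) =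
      Complex.I * (h : ℂ) / ((π : ℂ) * z) -
        Complex.I * (2 * (h : ℂ) * z / (π : ℂ)) *
          ∑' n : ℕ,
            Complex.exp (-((n : ℂ) + 1) ^ 2 * (h : ℂ) ^ 2) /
              (((n : ℂ) + 1) ^ 2 * (h : ℂ) ^ 2 - z ^ 2) := by
  have hπ0 : (0:ℝ) < π := Real.pi_pos
  have hπc : (π:ℂ) ≠ 0 := Complex.ofReal_ne_zero.mpr hπ0.ne'
  have hτc : (τm:ℂ) ≠ 0 := Complex.ofReal_ne_zero.mpr hτm.ne'
  have hz0 : z ≠ 0 := by intro hzz; rw [hzz] at hz; simp at hz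
  have hc : (0:ℝ) < π^2 / τm^2 := by positivity
  set c : ℝ := π^2 / τm^2 with hc_def
  -- nonvanishing of z ± real
  have hzr : ∀ r : ℝ, z + (r:ℂ) ≠ 0 := by
    intro r hE
    have := congrArg Complex.im hE
    simp at this
    linarith
  have hzr' : ∀ r : ℝ, z - (r:ℂ) ≠ 0 := by
    intro r
    simpa [sub_eq_add_neg] using hzr (-r)
  -- the denominator factorization
  have hfac : ∀ n : ℕ, ((n:ℂ) + 1) ^ 2 * (π:ℂ) ^ 2 - (τm:ℂ) ^ 2 * z ^ 2 =
      -(τm:ℂ)^2 * (z - (((n+1) * π / τm : ℝ) : ℂ)) * (z + (((n+1) * π / τm : ℝ) : ℂ)) := by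
    intro n
    push_cast
    field_simp
    ring
  have hden : ∀ n : ℕ, ((n:ℂ) + 1) ^ 2 * (π:ℂ) ^ 2 - (τm:ℂ) ^ 2 * z ^ 2 ≠ 0 := by
    intro n
    rw [hfac n]
    exact mul_ne_zero (mul_ne_zero (by simpa using pow_ne_zero 2 hτc) (hzr' _)) (hzr _)
  -- numerator as real exp
  have hnum : ∀ n : ℕ, Complex.exp (-((n : ℂ) + 1) ^ 2 * (π : ℂ) ^ 2 / (τm : ℂ) ^ 2) =
      ((Real.exp (-c * ((n:ℝ)+1)^2) : ℝ) : ℂ) := by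
    intro n
    have hE : -((n : ℂ) + 1) ^ 2 * (π : ℂ) ^ 2 / (τm : ℂ) ^ 2 =
        ((-c * ((n:ℝ)+1)^2 : ℝ) : ℂ) := by
      rw [hc_def]
      push_cast
      field_simp
    rw [hE, Complex.ofReal_exp]
  -- bound on norms of the target terms
  have him2 : (0:ℝ) < τm^2 * (z.im * z.im) := by positivity
  have hTbound : ∀ n : ℕ,
      ‖Complex.exp (-((n : ℂ) + 1) ^ 2 * (π : ℂ) ^ 2 / (τm : ℂ) ^ 2) /
        (((n : ℂ) + 1) ^ 2 * (π : ℂ) ^ 2 - (τm : ℂ) ^ 2 * z ^ 2)‖ ≤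
      (τm^2 * (z.im * z.im))⁻¹ * Real.exp (-c * ((n:ℝ)+1)^2) := by
    intro n
    rw [norm_div, hnum n, Complex.norm_real, Real.norm_of_nonneg (Real.exp_pos _).le]
    rw [div_eq_inv_mul]
    apply mul_le_mul_of_nonneg_right _ (Real.exp_pos _).le
    apply inv_anti₀ him2
    rw [hfac n]
    have h1 : |(z - (((n+1) * π / τm : ℝ) : ℂ)).im| ≤ ‖z - (((n+1) * π / τm : ℝ) : ℂ)‖ := by
      simpa using Complex.abs_im_le_norm (z - (((n+1) * π / τm : ℝ) : ℂ))
    have h2 : |(z + (((n+1) * π / τm : ℝ) : ℂ)).im| ≤ ‖z + (((n+1) * π / τm : ℝ) : ℂ)‖ := by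
      simpa using Complex.abs_im_le_norm (z + (((n+1) * π / τm : ℝ) : ℂ))
    simp only [Complex.sub_im, Complex.add_im, Complex.ofReal_im, sub_zero, add_zero,
      abs_of_pos hz] at h1 h2
    calc τm^2 * (z.im * z.im) ≤ τm^2 * (‖z - (((n+1) * π / τm : ℝ) : ℂ)‖ *
          ‖z + (((n+1) * π / τm : ℝ) : ℂ)‖) := by
          apply mul_le_mul_of_nonneg_left _ (sq_nonneg τm)
          exact mul_le_mul h1 h2 hz.le (norm_nonneg _)
      _ = ‖-(τm:ℂ)^2 * (z - (((n+1) * π / τm : ℝ) : ℂ)) * (z + (((n+1) * π / τm : ℝ) : ℂ))‖ := by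
          rw [norm_mul, norm_mul, norm_neg]
          simp [← Complex.ofReal_pow, abs_of_pos (by positivity : (0:ℝ) < τm^2), mul_assoc]
  have hsumexp : Summable fun n : ℕ => Real.exp (-c * ((n:ℝ)+1)^2) := by
    have := (cr_summable_nat hc).comp_injective (add_right_injective 1)
    apply this.congr
    intro n
    simp [Function.comp, add_comm]
  have hTsum : Summable (fun n : ℕ =>
      ‖Complex.exp (-((n : ℂ) + 1) ^ 2 * (π : ℂ) ^ 2 / (τm : ℂ) ^ 2) /
        (((n : ℂ) + 1) ^ 2 * (π : ℂ) ^ 2 - (τm : ℂ) ^ 2 * z ^ 2)‖) := by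
    apply Summable.of_nonneg_of_le (fun n => norm_nonneg _) hTbound
    exact hsumexp.mul_left _
  refine ⟨hTsum, ?_, ?_⟩
  · -- main identity
    have hsπ : Real.sqrt π ≠ 0 := by positivity
    set w : ℤ → ℂ := fun n => Complex.I * (z - (((n:ℝ) * π / τm : ℝ) : ℂ)) with hw_def
    have hwre : ∀ n : ℤ, (w n).re = -z.im := by
      intro n
      simp [hw_def, Complex.mul_re]
    have hwneg : ∀ n : ℤ, (w n).re < 0 := fun n => by rw [hwre n]; linarith
    set F : ℤ → ℝ → ℂ := fun n x =>
      ((Real.exp (-c * (n:ℝ)^2) : ℝ) : ℂ) * Complex.exp (w n * x) with hF_def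
    have hFint : ∀ n : ℤ, Integrable (F n) (volume.restrict (Ioi 0)) :=
      fun n => (cr_integrable (hwneg n)).const_mul _
    have hFnormpt : ∀ n : ℤ, ∀ x : ℝ, ‖F n x‖ =
        Real.exp (-c * (n:ℝ)^2) * Real.exp (-z.im * x) := by
      intro n x
      rw [hF_def]
      have h1 : (w n * (x:ℂ)).re = -z.im * x := by
        rw [show (w n * (x:ℂ)).re = (w n).re * x from by simp [Complex.mul_re], hwre n]
      simp only [norm_mul, Complex.norm_real, Real.norm_eq_abs, Complex.norm_exp, h1,
        _root_.abs_of_nonneg (Real.exp_pos _).le]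
    have hFsum : Summable fun n : ℤ => ∫ x in Ioi (0:ℝ), ‖F n x‖ := by
      have : (fun n : ℤ => ∫ x in Ioi (0:ℝ), ‖F n x‖) =
          fun n : ℤ => Real.exp (-c * (n:ℝ)^2) * ∫ x in Ioi (0:ℝ), Real.exp (-z.im * x) := by
        funext n
        simp_rw [hFnormpt n]
        exact integral_const_mul _ _
      rw [this]
      exact (cr_summable_int hc).mul_right _
    have key := integral_tsum_of_summable_integral_norm hFint hFsum
    have hpt : ∀ x : ℝ,
        ((∑' k : ℤ, Real.exp (-(x + 2 * k * τm) ^ 2 / 4) : ℝ) : ℂ) *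
          Complex.exp (Complex.I * z * x) =
        ((Real.sqrt π / τm : ℝ) : ℂ) * ∑' n : ℤ, F n x := by
      intro x
      rw [cr_poisson hτm x, mul_assoc]
      congr 1
      rw [← tsum_mul_right]
      apply tsum_congr
      intro n
      rw [hF_def]
      simp only []
      rw [Complex.ofReal_exp, ← Complex.exp_add, ← Complex.exp_add]
      congr 1
      rw [hw_def, hc_def]
      simp only []
      push_cast
      field_simp
      ring
    set g : ℤ → ℂ := fun n => ((Real.exp (-c * (n:ℝ)^2) : ℝ) : ℂ) * -(w n)⁻¹ with hg_def
    have hFval : ∀ n : ℤ, (∫ x in Ioi (0:ℝ), F n x) = g n := by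
      intro n
      rw [hg_def, hF_def]
      simp only []
      rw [integral_const_mul, cr_integral (hwneg n)]
    have hgbound : ∀ n : ℤ, ‖g n‖ ≤ Real.exp (-c * (n:ℝ)^2) * (z.im)⁻¹ := by
      intro n
      rw [hg_def]
      simp only [norm_mul, norm_neg, norm_inv, Complex.norm_real,
        Real.norm_of_nonneg (Real.exp_pos _).le]
      apply mul_le_mul_of_nonneg_left _ (Real.exp_pos _).le
      apply inv_anti₀ hz
      rw [hw_def]
      simp only [norm_mul, Complex.norm_I, one_mul]
      have h1 := Complex.abs_im_le_norm (z - (((n:ℝ) * π / τm : ℝ) : ℂ))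
      simp only [Complex.sub_im, Complex.ofReal_im, sub_zero, abs_of_pos hz] at h1
      exact h1
    have hgZ : Summable g :=
      Summable.of_norm_bounded ((cr_summable_int hc).mul_right _) hgbound
    have hg0 : Summable fun n : ℕ => g ↑n :=
      hgZ.comp_injective fun a b hab => by exact_mod_cast hab
    have hgpos : Summable fun n : ℕ => g (↑n + 1) :=
      hgZ.comp_injective fun a b hab => by omega
    have hgneg : Summable fun n : ℕ => g (-(↑n + 1)) :=
      hgZ.comp_injective fun a b hab => by omega
    have hsplit := tsum_of_nat_of_neg_add_one hg0 hgneg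
    have h0 := hg0.tsum_eq_zero_add
    push_cast at h0
    have hadd := (hgpos.tsum_add hgneg).symm
    have hg0val : g (0:ℤ) = Complex.I * z⁻¹ := by
      rw [hg_def, hw_def]
      simp only []
      push_cast
      rw [show (-(c:ℂ) * 0 ^ 2 : ℂ) = 0 by ring, Complex.exp_zero,
        show ((0:ℂ) * (π:ℂ) / (τm:ℂ) : ℂ) = 0 by ring, sub_zero, one_mul, mul_inv,
        Complex.inv_I]
      ring
    have hpair : ∀ n : ℕ, g (↑n + 1) + g (-(↑n + 1)) =
        (-(2 * Complex.I * (τm:ℂ)^2 * z)) * (Complex.exp (-((n : ℂ) + 1) ^ 2 * (π : ℂ) ^ 2 / (τm : ℂ) ^ 2) /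
            (((n : ℂ) + 1) ^ 2 * (π : ℂ) ^ 2 - (τm : ℂ) ^ 2 * z ^ 2)) := by
      intro n
      have hB1 : z - ((n:ℂ)+1) * (π:ℂ) / (τm:ℂ) ≠ 0 := by
        have := hzr' (((n:ℝ)+1) * π / τm)
        push_cast at this
        convert this using 2
      have hB2 : z + ((n:ℂ)+1) * (π:ℂ) / (τm:ℂ) ≠ 0 := by
        have := hzr (((n:ℝ)+1) * π / τm)
        push_cast at this
        convert this using 2
      have ecast1 : (((↑n + 1 : ℤ)):ℝ) = (n:ℝ) + 1 := by push_cast; ring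
      have ecast2 : ((-(↑n + 1) : ℤ):ℝ) = -((n:ℝ) + 1) := by push_cast; ring
      rw [hnum n, hfac n, hg_def, hw_def]
      simp only [ecast1, ecast2]
      rw [show -c * (-((n:ℝ) + 1))^2 = -c * ((n:ℝ) + 1)^2 by ring,
        show ((-((n:ℝ) + 1)) * π / τm : ℝ) = -(((n:ℝ) + 1) * π / τm : ℝ) by ring,
        Complex.ofReal_neg, sub_neg_eq_add]
      exact cr_pair _ _ _ _ z (hzr' _) (hzr _) (by simpa using pow_ne_zero 2 hτc) (by ring)
    calc (1 / (Real.sqrt π : ℂ)) *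
        ∫ τ in Set.Ioi (0:ℝ),
          ((∑' k : ℤ, Real.exp (-(τ + 2 * k * τm) ^ 2 / 4) : ℝ) : ℂ) *
            Complex.exp (Complex.I * z * τ)
        = (1 / (Real.sqrt π : ℂ)) *
            ∫ x in Set.Ioi (0:ℝ), ((Real.sqrt π / τm : ℝ) : ℂ) * ∑' n : ℤ, F n x := by
          rw [integral_congr_ae (Filter.Eventually.of_forall hpt)]
      _ = (1 / (Real.sqrt π : ℂ)) * (((Real.sqrt π / τm : ℝ) : ℂ) *
            ∫ x in Set.Ioi (0:ℝ), ∑' n : ℤ, F n x) := by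
          rw [integral_const_mul]
      _ = (1 / (τm : ℂ)) * ∑' n : ℤ, ∫ x in Set.Ioi (0:ℝ), F n x := by
          rw [← key, ← mul_assoc]
          congr 1
          have h1 : ((Real.sqrt π : ℝ) : ℂ) ≠ 0 := Complex.ofReal_ne_zero.mpr hsπ
          rw [Complex.ofReal_div, div_mul_div_comm, one_mul, div_mul_eq_div_div, div_self h1]
      _ = (1 / (τm : ℂ)) * ∑' n : ℤ, g n := by rw [tsum_congr hFval]
      _ = (1 / (τm : ℂ)) * (Complex.I * z⁻¹ + (-(2 * Complex.I * (τm:ℂ)^2 * z)) *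
            ∑' n : ℕ, (Complex.exp (-((n : ℂ) + 1) ^ 2 * (π : ℂ) ^ 2 / (τm : ℂ) ^ 2) /
            (((n : ℂ) + 1) ^ 2 * (π : ℂ) ^ 2 - (τm : ℂ) ^ 2 * z ^ 2))) := by
          rw [hsplit, h0, hg0val, add_assoc, hadd, tsum_congr hpair, tsum_mul_left]
      _ = Complex.I / ((τm : ℂ) * z) -
          2 * Complex.I * (τm : ℂ) * z * ∑' n : ℕ, (Complex.exp (-((n : ℂ) + 1) ^ 2 * (π : ℂ) ^ 2 / (τm : ℂ) ^ 2) /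
            (((n : ℂ) + 1) ^ 2 * (π : ℂ) ^ 2 - (τm : ℂ) ^ 2 * z ^ 2)) := by
          generalize (∑' n : ℕ, (Complex.exp (-((n : ℂ) + 1) ^ 2 * (π : ℂ) ^ 2 / (τm : ℂ) ^ 2) /
            (((n : ℂ) + 1) ^ 2 * (π : ℂ) ^ 2 - (τm : ℂ) ^ 2 * z ^ 2))) = S
          field_simp
          ring
  · -- third conjunct: algebraic identity
    subst hh
    have hterm : ∀ n : ℕ,
        Complex.exp (-((n : ℂ) + 1) ^ 2 * ((π / τm : ℝ) : ℂ) ^ 2) /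
          (((n : ℂ) + 1) ^ 2 * ((π / τm : ℝ) : ℂ) ^ 2 - z ^ 2) =
        (τm:ℂ)^2 * (Complex.exp (-((n : ℂ) + 1) ^ 2 * (π : ℂ) ^ 2 / (τm : ℂ) ^ 2) /
          (((n : ℂ) + 1) ^ 2 * (π : ℂ) ^ 2 - (τm : ℂ) ^ 2 * z ^ 2)) := by
      intro n
      have hd2 : ((n:ℂ) + 1) ^ 2 * ((π / τm : ℝ) : ℂ) ^ 2 - z ^ 2 =
          (((n:ℂ) + 1) ^ 2 * (π:ℂ) ^ 2 - (τm:ℂ) ^ 2 * z ^ 2) / (τm:ℂ)^2 := by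
        push_cast
        field_simp
      have hn2 : -((n : ℂ) + 1) ^ 2 * ((π / τm : ℝ) : ℂ) ^ 2 =
          -((n : ℂ) + 1) ^ 2 * (π : ℂ) ^ 2 / (τm : ℂ) ^ 2 := by
        push_cast
        field_simp
      rw [hd2, hn2, div_div_eq_mul_div,
        mul_comm (Complex.exp (-((n : ℂ) + 1) ^ 2 * (π : ℂ) ^ 2 / (τm : ℂ) ^ 2)) ((τm:ℂ)^2),
        mul_div_assoc]
    rw [tsum_congr hterm, tsum_mul_left]
    have e1 : Complex.I / ((τm : ℂ) * z) = Complex.I * ((π / τm : ℝ) : ℂ) / ((π:ℂ) * z) := by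
      push_cast
      field_simp
    have e2 : Complex.I * (2 * ((π / τm : ℝ) : ℂ) * z / (π:ℂ)) * (τm:ℂ)^2 =
        2 * Complex.I * (τm:ℂ) * z := by
      push_cast
      field_simp
    rw [e1, ← e2, mul_assoc]
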